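/- Let d ≥ 1, β ∈ (0, d], and α > (d−β)/2. There is a constant C = C(d, α, β) > 0 such that for every finite signed Borel measure μ on ℝ^d with ‖μ‖_B := sup_{t>0} t^{(d−β)/2} ‖p_t ∗ μ‖_{L^∞} < ∞ and every R > 0, ∫_{{|ξ| ≥ R}} |ξ|^{−2α} |μ̂(ξ)|² dξ ≤ C R^{d−β−2α} ‖μ‖ ‖μ‖_B. -/

import Mathlib

open MeasureTheory Real
open scoped ENNReal

noncomputable section

/-- Euclidean space `ℝ^d`. -/
abbrev Ed (d : ℕ) := EuclideanSpace ℝ (Fin d)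

/-- The heat kernel `p_t(x) = (4πt)^{-d/2} exp(-|x|²/(4t))`. -/
def heatKernel (d : ℕ) (t : ℝ) (x : Ed d) : ℝ :=
  (4 * π * t) ^ (-(d : ℝ) / 2) * Real.exp (-‖x‖ ^ 2 / (4 * t))

/-- Integral of a real function against a finite signed measure. -/
def smIntegral {d : ℕ} (ν : MeasureTheory.SignedMeasure (Ed d)) (f : Ed d → ℝ) : ℝ :=
  (∫ x, f x ∂ν.toJordanDecomposition.posPart) - ∫ x, f x ∂ν.toJordanDecomposition.negPart

/-- Heat-kernel convolution `(p_t ∗ ν)(x)` of a finite signed measure. -/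
def heatConv (d : ℕ) (t : ℝ) (ν : MeasureTheory.SignedMeasure (Ed d)) (x : Ed d) : ℝ :=
  smIntegral ν (fun y => heatKernel d t (x - y))

/-- The Fourier transform `ν̂(ξ) = ∫ exp(-2πi x·ξ) dν(x)` of a finite signed measure. -/
def fourierSM (d : ℕ) (ν : MeasureTheory.SignedMeasure (Ed d)) (ξ : Ed d) : ℂ :=
  (∫ x, Complex.exp (-(2 * π * Complex.I) * ((inner ℝ x ξ : ℝ) : ℂ)) ∂ν.toJordanDecomposition.posPart)
  - ∫ x, Complex.exp (-(2 * π * Complex.I) * ((inner ℝ x ξ : ℝ) : ℂ)) ∂ν.toJordanDecomposition.negPart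

/-- The Besov `Ḃ^{β-d}_{∞,∞}` norm `sup_{t>0} t^{(d-β)/2} ‖p_t ∗ ν‖_∞`. -/
def besovNorm (d : ℕ) (β : ℝ) (ν : MeasureTheory.SignedMeasure (Ed d)) : ℝ≥0∞ :=
  ⨆ t : {t : ℝ // 0 < t},
    ENNReal.ofReal (t.1 ^ (((d : ℝ) - β) / 2)) * eLpNorm (heatConv d t.1 ν) ⊤ volume

/-- The weak `L^p` quasinorm `sup_{λ>0} λ |{|g| > λ}|^{1/p}`. -/
def weakNorm (d : ℕ) (p : ℝ) (g : Ed d → ℂ) : ℝ≥0∞ :=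
  ⨆ l : {l : ℝ // 0 < l},
    ENNReal.ofReal l.1 * (volume {ξ : Ed d | l.1 < ‖g ξ‖}) ^ (1 / p)

/-- Total variation of a signed measure, as a real number. -/
def tv {d : ℕ} (ν : MeasureTheory.SignedMeasure (Ed d)) : ℝ :=
  (ν.totalVariation Set.univ).toReal

/-! ### Auxiliary lemmas -/

open Complex in
/-- The complex exponential kernel appearing in the Fourier transform. -/
def ker {d : ℕ} (x ξ : Ed d) : ℂ := Complex.exp (-(2 * π * Complex.I) * ((inner ℝ x ξ : ℝ) : ℂ))

lemma fourierSM_eq {d : ℕ} (ν : MeasureTheory.SignedMeasure (Ed d)) (ξ : Ed d) :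
    fourierSM d ν ξ = (∫ x, ker x ξ ∂ν.toJordanDecomposition.posPart)
      - ∫ x, ker x ξ ∂ν.toJordanDecomposition.negPart := rfl

lemma ker_norm {d : ℕ} (x ξ : Ed d) : ‖ker x ξ‖ = 1 := by
  unfold ker
  rw [Complex.norm_exp]
  simp [Complex.mul_re]

@[fun_prop]
lemma inner_cont {d : ℕ} {X : Type*} [TopologicalSpace X] (f g : X → Ed d)
    (hf : Continuous f) (hg : Continuous g) :
    Continuous (fun p : X => (inner ℝ (f p) (g p) : ℝ)) :=
  hf.inner hg

@[fun_prop]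
lemma ker_continuous2 {d : ℕ} {X : Type*} [TopologicalSpace X] (f g : X → Ed d)
    (hf : Continuous f) (hg : Continuous g) : Continuous (fun p : X => ker (f p) (g p)) := by
  unfold ker
  exact Complex.continuous_exp.comp
    (continuous_const.mul (Complex.continuous_ofReal.comp (hf.inner hg)))

/-- auxiliary gaussian -/
def gaussFn (d : ℕ) (b : ℝ) (v : Ed d) : ℝ := (π / b) ^ ((d:ℝ)/2) * rexp (-π^2 * ‖v‖^2 / b)

lemma heatKernel_nonneg (d : ℕ) (t : ℝ) (ht : 0 < t) (x : Ed d) : 0 ≤ heatKernel d t x := by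
  unfold heatKernel; positivity

lemma heatKernel_le (d : ℕ) (t : ℝ) (ht : 0 < t) (x : Ed d) :
    heatKernel d t x ≤ (4 * π * t) ^ (-(d : ℝ) / 2) := by
  unfold heatKernel
  have h1 : rexp (-‖x‖ ^ 2 / (4 * t)) ≤ 1 := by
    rw [Real.exp_le_one_iff]
    have h0 : (0:ℝ) ≤ ‖x‖ ^ 2 / (4 * t) := by positivity
    have : -‖x‖ ^ 2 / (4 * t) = -(‖x‖ ^ 2 / (4 * t)) := by ring
    linarith [this.ge]
  calc (4 * π * t) ^ (-(d : ℝ) / 2) * rexp (-‖x‖ ^ 2 / (4 * t))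
      ≤ (4 * π * t) ^ (-(d : ℝ) / 2) * 1 :=
        mul_le_mul_of_nonneg_left h1 (by positivity)
    _ = (4 * π * t) ^ (-(d : ℝ) / 2) := by ring

lemma integrable_gauss (d : ℕ) (b : ℝ) (hb : 0 < b) :
    Integrable (fun x : Ed d => rexp (-b * ‖x‖ ^ 2)) := by
  have := (GaussianFourier.integrable_cexp_neg_mul_sq_norm_add
    (V := Ed d) (b := ((b : ℝ) : ℂ)) (by simpa using hb) 0 0).norm
  refine this.congr (Filter.Eventually.of_forall fun x => ?_)
  simp only [Complex.norm_exp]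
  have : (-(b:ℂ) * (‖x‖:ℂ) ^ 2 + 0 * ((inner ℝ (0 : Ed d) x : ℝ) : ℂ)) = ((-b * ‖x‖ ^ 2 : ℝ) : ℂ) := by
    push_cast; ring
  rw [this, Complex.ofReal_re]

lemma gaussFn_continuous (d : ℕ) (b : ℝ) : Continuous (fun v : Ed d => gaussFn d b v) := by
  unfold gaussFn; fun_prop

lemma gaussFn_nonneg (d : ℕ) (b : ℝ) (hb : 0 < b) (v : Ed d) : 0 ≤ gaussFn d b v := by
  unfold gaussFn; positivity

lemma gaussFn_le (d : ℕ) (b : ℝ) (hb : 0 < b) (v : Ed d) :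
    gaussFn d b v ≤ (π / b) ^ ((d:ℝ)/2) := by
  unfold gaussFn
  have h1 : rexp (-π^2 * ‖v‖^2 / b) ≤ 1 := by
    rw [Real.exp_le_one_iff]
    have : (0:ℝ) ≤ π^2 * ‖v‖^2 / b := by positivity
    have heq : -π^2 * ‖v‖^2 / b = -(π^2 * ‖v‖^2 / b) := by ring
    linarith [heq.ge]
  calc (π / b) ^ ((d:ℝ)/2) * rexp (-π^2 * ‖v‖^2 / b) ≤ (π / b) ^ ((d:ℝ)/2) * 1 := by
        apply mul_le_mul_of_nonneg_left h1 (by positivity)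
    _ = (π / b) ^ ((d:ℝ)/2) := by ring

open Complex ComplexConjugate in
lemma inner_cexp {d : ℕ} (b : ℝ) (hb : 0 < b) (x y : Ed d) :
    ∫ ξ : Ed d, (rexp (-b * ‖ξ‖^2) : ℂ) * (ker x ξ * conj (ker y ξ))
      = ((gaussFn d b (x - y) : ℝ) : ℂ) := by
  have key := GaussianFourier.integral_cexp_neg_mul_sq_norm_add
    (V := Ed d) (b := (b:ℂ)) (by simpa using hb) (-(2 * π * Complex.I)) (x - y)
  have hintg : ∀ ξ : Ed d, (rexp (-b * ‖ξ‖^2) : ℂ) * (ker x ξ * conj (ker y ξ))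
      = Complex.exp (-(b:ℂ) * ‖ξ‖^2 + (-(2 * π * Complex.I)) * ((inner ℝ (x - y) ξ : ℝ) : ℂ)) := by
    intro ξ
    unfold ker
    rw [← Complex.exp_conj]
    rw [Complex.ofReal_exp]
    rw [← Complex.exp_add, ← Complex.exp_add]
    congr 1
    have h1 : (starRingEnd ℂ) (-(2 * ↑π * Complex.I) * ((inner ℝ y ξ : ℝ) : ℂ))
        = (2 * ↑π * Complex.I) * ((inner ℝ y ξ : ℝ) : ℂ) := by
      simp only [map_mul, map_neg, map_ofNat, Complex.conj_I, Complex.conj_ofReal]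
      ring
    rw [h1]
    have h2 : ((inner ℝ (x - y) ξ : ℝ) : ℂ) = ((inner ℝ x ξ : ℝ) : ℂ) - ((inner ℝ y ξ : ℝ) : ℂ) := by
      rw [inner_sub_left]; push_cast; ring
    rw [h2]
    push_cast
    ring
  rw [integral_congr_ae (Filter.Eventually.of_forall hintg), key]
  have hd : (Module.finrank ℝ (Ed d) : ℂ) = (d : ℂ) := by norm_cast; simp
  have hexp : (-(2 * ↑π * Complex.I)) ^ 2 * (‖x - y‖^2 : ℂ) / (4 * (b:ℂ))
      = ((-π^2 * ‖x - y‖^2 / b : ℝ) : ℂ) := by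
    have : Complex.I ^ 2 = -1 := Complex.I_sq
    push_cast
    field_simp
    ring_nf
    rw [this]
    ring
  rw [hexp]
  unfold gaussFn
  rw [Complex.ofReal_mul, Complex.ofReal_cpow (by positivity), Complex.ofReal_exp]
  push_cast
  rw [hd]

open Complex ComplexConjugate in
/-- The key cross term computation -/
lemma crossTerm {d : ℕ} (μa μb : Measure (Ed d)) [IsFiniteMeasure μa] [IsFiniteMeasure μb]
    (b : ℝ) (hb : 0 < b) :
    ∫ ξ : Ed d, (rexp (-b * ‖ξ‖^2) : ℂ) *
        ((∫ x, ker x ξ ∂μa) * conj (∫ y, ker y ξ ∂μb))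
      = ((∫ x, ∫ y, gaussFn d b (x - y) ∂μb ∂μa : ℝ) : ℂ) := by
  have hcont : Continuous (fun p : Ed d × (Ed d × Ed d) =>
      (rexp (-b * ‖p.1‖^2) : ℂ) * (ker p.2.1 p.1 * conj (ker p.2.2 p.1))) := by
    apply Continuous.mul (by fun_prop)
    apply Continuous.mul (by fun_prop)
    exact Complex.continuous_conj.comp (by fun_prop)
  set f : Ed d → (Ed d × Ed d) → ℂ := fun ξ z =>
    (rexp (-b * ‖ξ‖^2) : ℂ) * (ker z.1 ξ * conj (ker z.2 ξ)) with hf_def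
  have hnorm : ∀ ξ z, ‖f ξ z‖ = rexp (-b * ‖ξ‖^2) := by
    intro ξ z
    rw [hf_def]
    simp only [norm_mul, RCLike.norm_conj, ker_norm, Complex.norm_real]
    rw [Real.norm_eq_abs, abs_of_pos (Real.exp_pos _)]
    ring
  have hint : Integrable (Function.uncurry f) (volume.prod (μa.prod μb)) := by
    apply Integrable.mono' (g := fun p => rexp (-b * ‖p.1‖^2))
    · have := (integrable_gauss d b hb).mul_prod
        (integrable_const (1:ℝ) (μ := μa.prod μb))
      simpa using this
    · exact hcont.aestronglyMeasurable
    · exact Filter.Eventually.of_forall fun p => le_of_eq (hnorm p.1 p.2)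
  have step1 : ∫ ξ : Ed d, (rexp (-b * ‖ξ‖^2) : ℂ) *
        ((∫ x, ker x ξ ∂μa) * conj (∫ y, ker y ξ ∂μb))
      = ∫ ξ : Ed d, ∫ z, f ξ z ∂(μa.prod μb) := by
    apply integral_congr_ae (Filter.Eventually.of_forall fun ξ => ?_)
    rw [← integral_conj, ← integral_prod_mul, ← integral_const_mul]
  have step2 : ∫ ξ : Ed d, ∫ z, f ξ z ∂(μa.prod μb)
      = ∫ z, (∫ ξ : Ed d, f ξ z) ∂(μa.prod μb) := integral_integral_swap hint
  have step3 : ∀ z : Ed d × Ed d, ∫ ξ : Ed d, f ξ z = ((gaussFn d b (z.1 - z.2) : ℝ) : ℂ) :=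
    fun z => inner_cexp b hb z.1 z.2
  have hgcont : Continuous (fun z : Ed d × Ed d => gaussFn d b (z.1 - z.2)) := by
    unfold gaussFn; fun_prop
  have hgint : Integrable (fun z : Ed d × Ed d => gaussFn d b (z.1 - z.2)) (μa.prod μb) := by
    apply Integrable.mono' (g := fun _ => (π / b) ^ ((d:ℝ)/2)) (integrable_const _)
      hgcont.aestronglyMeasurable
    refine Filter.Eventually.of_forall fun z => ?_
    rw [Real.norm_eq_abs, _root_.abs_of_nonneg (gaussFn_nonneg d b hb _)]
    exact gaussFn_le d b hb _
  rw [step1, step2]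
  rw [integral_congr_ae (Filter.Eventually.of_forall step3)]
  rw [integral_integral (f := fun x y => gaussFn d b (x - y)) hgint]
  exact integral_ofReal
section Part2
variable {d : ℕ}

lemma gaussFn_eq_heat (d : ℕ) (t : ℝ) (ht : 0 < t) (v : Ed d) :
    gaussFn d (8 * π^2 * t) v = heatKernel d (2 * t) v := by
  unfold gaussFn heatKernel
  have hπ := Real.pi_pos
  have h1 : π / (8 * π^2 * t) = (4 * π * (2 * t))⁻¹ := by
    field_simp
    ring
  have h2 : -π^2 * ‖v‖^2 / (8 * π^2 * t) = -‖v‖ ^ 2 / (4 * (2 * t)) := by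
    field_simp
    ring
  rw [h1, h2, Real.inv_rpow (by positivity), ← Real.rpow_neg (by positivity), neg_div]
  rw [show -((d:ℝ) / 2) = -(d:ℝ) / 2 from (neg_div 2 (d:ℝ)).symm]

/-- Continuity of the Fourier-type integral of a finite measure. -/
lemma Fcont (μ : Measure (Ed d)) [IsFiniteMeasure μ] :
    Continuous (fun ξ : Ed d => ∫ x, ker x ξ ∂μ) := by
  apply continuous_of_dominated (bound := fun _ => (1:ℝ))
  · exact fun ξ => (ker_continuous2 (fun x : Ed d => x) (fun _ => ξ) continuous_id
      continuous_const).aestronglyMeasurable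
  · exact fun ξ => Filter.Eventually.of_forall fun x => le_of_eq (ker_norm x ξ)
  · exact integrable_const 1
  · exact Filter.Eventually.of_forall fun x =>
      ker_continuous2 (fun _ => x) (fun ξ : Ed d => ξ) continuous_const continuous_id

lemma norm_F_le (μ : Measure (Ed d)) [IsFiniteMeasure μ] (ξ : Ed d) :
    ‖∫ x, ker x ξ ∂μ‖ ≤ (μ Set.univ).toReal := by
  calc ‖∫ x, ker x ξ ∂μ‖ ≤ ∫ x, ‖ker x ξ‖ ∂μ := norm_integral_le_integral_norm _
    _ = ∫ _x, (1:ℝ) ∂μ := by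
        apply integral_congr_ae (Filter.Eventually.of_forall fun x => ker_norm x ξ)
    _ = (μ Set.univ).toReal := by simp [Measure.real]

/-- Continuity of convolution with the heat kernel against a finite measure. -/
lemma conv_cont (μ : Measure (Ed d)) [IsFiniteMeasure μ] (t : ℝ) (ht : 0 < t) :
    Continuous (fun x : Ed d => ∫ y, heatKernel d t (x - y) ∂μ) := by
  apply continuous_of_dominated (bound := fun _ => (4 * π * t) ^ (-(d : ℝ) / 2))
  · intro x
    apply Continuous.aestronglyMeasurable
    have : Continuous (heatKernel d t) := by unfold heatKernel; fun_prop
    exact this.comp (continuous_const.sub continuous_id)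
  · intro x
    refine Filter.Eventually.of_forall fun y => ?_
    rw [Real.norm_eq_abs, abs_of_nonneg (heatKernel_nonneg d t ht _)]
    exact heatKernel_le d t ht _
  · exact integrable_const _
  · refine Filter.Eventually.of_forall fun y => ?_
    have : Continuous (heatKernel d t) := by unfold heatKernel; fun_prop
    exact this.comp (continuous_id.sub continuous_const)

lemma heatConv_continuous (ν : MeasureTheory.SignedMeasure (Ed d)) (t : ℝ) (ht : 0 < t) :
    Continuous (heatConv d t ν) := by
  have : heatConv d t ν = fun x =>
      (∫ y, heatKernel d t (x - y) ∂ν.toJordanDecomposition.posPart)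
      - ∫ y, heatKernel d t (x - y) ∂ν.toJordanDecomposition.negPart := rfl
  rw [this]
  exact (conv_cont _ t ht).sub (conv_cont _ t ht)

/-- A continuous function is bounded pointwise by (the toReal of) its essential supremum. -/
lemma cont_le_essSup (f : Ed d → ℝ) (hc : Continuous f)
    (hfin : eLpNorm f ⊤ (volume : Measure (Ed d)) ≠ ⊤) (x : Ed d) :
    |f x| ≤ (eLpNorm f ⊤ (volume : Measure (Ed d))).toReal := by
  set M := (eLpNorm f ⊤ (volume : Measure (Ed d))).toReal with hM
  have hae : ∀ᵐ y ∂(volume : Measure (Ed d)), |f y| ≤ M := by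
    have h1 : ∀ᵐ y ∂(volume : Measure (Ed d)), (‖f y‖₊ : ℝ≥0∞) ≤ eLpNormEssSup f volume :=
      ae_le_eLpNormEssSup
    filter_upwards [h1] with y hy
    have h2 : ((‖f y‖₊ : ℝ≥0∞)).toReal ≤ M := by
      rw [hM]
      apply ENNReal.toReal_mono _ hy
      rwa [← eLpNorm_exponent_top]
    simpa [Real.norm_eq_abs] using h2
  by_contra hcon
  push_neg at hcon
  set U := {y : Ed d | M < |f y|} with hU
  have hUopen : IsOpen U := isOpen_lt continuous_const (hc.abs)
  have hpos : 0 < volume U := hUopen.measure_pos volume ⟨x, hcon⟩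
  have hzero : volume U = 0 := by
    have := hae
    rw [MeasureTheory.ae_iff] at this
    convert this using 2
    ext y
    simp [hU, not_le]
  rw [hzero] at hpos
  exact lt_irrefl _ hpos

end Part2
section Part3
open Complex ComplexConjugate
variable {d : ℕ}

lemma term_integrable (μa μb : Measure (Ed d)) [IsFiniteMeasure μa] [IsFiniteMeasure μb]
    (b : ℝ) (hb : 0 < b) :
    Integrable (fun ξ : Ed d => (rexp (-b * ‖ξ‖^2) : ℂ) *
        ((∫ x, ker x ξ ∂μa) * conj (∫ y, ker y ξ ∂μb))) := by
  apply Integrable.mono'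
    (g := fun ξ : Ed d => (μa Set.univ).toReal * (μb Set.univ).toReal * rexp (-b * ‖ξ‖^2))
  · exact ((integrable_gauss d b hb).const_mul _)
  · apply Continuous.aestronglyMeasurable
    apply Continuous.mul (by fun_prop)
    exact (Fcont μa).mul (Complex.continuous_conj.comp (Fcont μb))
  · refine Filter.Eventually.of_forall fun ξ => ?_
    rw [norm_mul, norm_mul, RCLike.norm_conj, Complex.norm_real, Real.norm_eq_abs,
      abs_of_pos (Real.exp_pos _)]
    have h1 := norm_F_le μa ξ
    have h2 := norm_F_le μb ξ
    have e1 : (0:ℝ) ≤ rexp (-b * ‖ξ‖^2) := (Real.exp_pos _).le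
    calc rexp (-b * ‖ξ‖^2) * (‖∫ x, ker x ξ ∂μa‖ * ‖∫ y, ker y ξ ∂μb‖)
        ≤ rexp (-b * ‖ξ‖^2) * ((μa Set.univ).toReal * (μb Set.univ).toReal) := by
          apply mul_le_mul_of_nonneg_left _ e1
          exact mul_le_mul h1 h2 (norm_nonneg _) ENNReal.toReal_nonneg
      _ = (μa Set.univ).toReal * (μb Set.univ).toReal * rexp (-b * ‖ξ‖^2) := by ring

lemma GG_integrable (μa μb : Measure (Ed d)) [IsFiniteMeasure μa] [IsFiniteMeasure μb]
    (b : ℝ) (hb : 0 < b) :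
    Integrable (fun x : Ed d => ∫ y, gaussFn d b (x - y) ∂μb) μa := by
  apply Integrable.mono' (g := fun _ => (π / b) ^ ((d:ℝ)/2) * (μb Set.univ).toReal)
    (integrable_const _)
  · apply Continuous.aestronglyMeasurable
    apply continuous_of_dominated (bound := fun _ => (π / b) ^ ((d:ℝ)/2))
    · intro x
      exact ((gaussFn_continuous d b).comp (continuous_const.sub continuous_id)).aestronglyMeasurable
    · intro x
      refine Filter.Eventually.of_forall fun y => ?_
      rw [Real.norm_eq_abs, _root_.abs_of_nonneg (gaussFn_nonneg d b hb _)]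
      exact gaussFn_le d b hb _
    · exact integrable_const _
    · exact Filter.Eventually.of_forall fun y =>
        (gaussFn_continuous d b).comp (continuous_id.sub continuous_const)
  · refine Filter.Eventually.of_forall fun x => ?_
    calc ‖∫ y, gaussFn d b (x - y) ∂μb‖ ≤ ∫ y, ‖gaussFn d b (x - y)‖ ∂μb :=
        norm_integral_le_integral_norm _
      _ ≤ ∫ _y, (π / b) ^ ((d:ℝ)/2) ∂μb := by
          apply integral_mono_of_nonneg (Filter.Eventually.of_forall fun y => norm_nonneg _)
            (integrable_const _)
          refine Filter.Eventually.of_forall fun y => ?_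
          dsimp only
          rw [Real.norm_eq_abs, _root_.abs_of_nonneg (gaussFn_nonneg d b hb _)]
          exact gaussFn_le d b hb _
      _ = (π / b) ^ ((d:ℝ)/2) * (μb Set.univ).toReal := by simp [mul_comm, Measure.real]

/-- The key identity:
`∫ e^{-8π²t|ξ|²} |ν̂(ξ)|² dξ = ∫ (p_{2t} ∗ ν) dν` (split into Jordan parts). -/
lemma key_eq (ν : MeasureTheory.SignedMeasure (Ed d)) (t : ℝ) (ht : 0 < t) :
    ∫ ξ : Ed d, rexp (-(8 * π^2 * t) * ‖ξ‖^2) * ‖fourierSM d ν ξ‖^2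
    = (∫ x, heatConv d (2*t) ν x ∂ν.toJordanDecomposition.posPart)
      - ∫ x, heatConv d (2*t) ν x ∂ν.toJordanDecomposition.negPart := by
  set μp := ν.toJordanDecomposition.posPart with hμp
  set μn := ν.toJordanDecomposition.negPart with hμn
  set b := 8 * π^2 * t with hbdef
  have hb : 0 < b := by rw [hbdef]; positivity
  set Fp : Ed d → ℂ := fun ξ => ∫ x, ker x ξ ∂μp with hFp
  set Fn : Ed d → ℂ := fun ξ => ∫ x, ker x ξ ∂μn with hFn
  set g : Ed d → ℂ := fun ξ => (rexp (-b * ‖ξ‖^2) : ℂ) with hg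
  -- complex version
  have hexpand : ∀ ξ : Ed d, ((rexp (-b * ‖ξ‖^2) * ‖fourierSM d ν ξ‖^2 : ℝ) : ℂ)
      = g ξ * (Fp ξ * conj (Fp ξ)) - g ξ * (Fp ξ * conj (Fn ξ))
        - g ξ * (Fn ξ * conj (Fp ξ)) + g ξ * (Fn ξ * conj (Fn ξ)) := by
    intro ξ
    have h1 : ((‖fourierSM d ν ξ‖^2 : ℝ) : ℂ)
        = fourierSM d ν ξ * conj (fourierSM d ν ξ) := by
      rw [Complex.mul_conj']
      push_cast
      ring
    have h2 : fourierSM d ν ξ = Fp ξ - Fn ξ := rfl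
    calc ((rexp (-b * ‖ξ‖^2) * ‖fourierSM d ν ξ‖^2 : ℝ) : ℂ)
        = g ξ * ((‖fourierSM d ν ξ‖^2 : ℝ) : ℂ) := by rw [Complex.ofReal_mul]
      _ = g ξ * ((Fp ξ - Fn ξ) * conj (Fp ξ - Fn ξ)) := by rw [h1, h2]
      _ = _ := by rw [map_sub]; ring
  have i1 := term_integrable μp μp b hb
  have i2 := term_integrable μp μn b hb
  have i3 := term_integrable μn μp b hb
  have i4 := term_integrable μn μn b hb
  have hsplit : (((∫ ξ : Ed d, rexp (-b * ‖ξ‖^2) * ‖fourierSM d ν ξ‖^2) : ℝ) : ℂ)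
      = (∫ ξ : Ed d, g ξ * (Fp ξ * conj (Fp ξ)))
        - (∫ ξ : Ed d, g ξ * (Fp ξ * conj (Fn ξ)))
        - (∫ ξ : Ed d, g ξ * (Fn ξ * conj (Fp ξ)))
        + ∫ ξ : Ed d, g ξ * (Fn ξ * conj (Fn ξ)) := by
    have h0 : (((∫ ξ : Ed d, rexp (-b * ‖ξ‖^2) * ‖fourierSM d ν ξ‖^2) : ℝ) : ℂ)
        = ∫ ξ : Ed d, ((rexp (-b * ‖ξ‖^2) * ‖fourierSM d ν ξ‖^2 : ℝ) : ℂ) :=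
      integral_ofReal.symm
    have i12 : Integrable (fun ξ : Ed d =>
        g ξ * (Fp ξ * conj (Fp ξ)) - g ξ * (Fp ξ * conj (Fn ξ))) volume := i1.sub i2
    have i123 : Integrable (fun ξ : Ed d =>
        g ξ * (Fp ξ * conj (Fp ξ)) - g ξ * (Fp ξ * conj (Fn ξ))
          - g ξ * (Fn ξ * conj (Fp ξ))) volume := i12.sub i3
    have eA : ∫ ξ : Ed d, (g ξ * (Fp ξ * conj (Fp ξ)) - g ξ * (Fp ξ * conj (Fn ξ))
          - g ξ * (Fn ξ * conj (Fp ξ)) + g ξ * (Fn ξ * conj (Fn ξ)))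
        = (∫ ξ : Ed d, (g ξ * (Fp ξ * conj (Fp ξ)) - g ξ * (Fp ξ * conj (Fn ξ))
          - g ξ * (Fn ξ * conj (Fp ξ)))) + ∫ ξ : Ed d, g ξ * (Fn ξ * conj (Fn ξ)) :=
      integral_add i123 i4
    have eB : ∫ ξ : Ed d, (g ξ * (Fp ξ * conj (Fp ξ)) - g ξ * (Fp ξ * conj (Fn ξ))
          - g ξ * (Fn ξ * conj (Fp ξ)))
        = (∫ ξ : Ed d, (g ξ * (Fp ξ * conj (Fp ξ)) - g ξ * (Fp ξ * conj (Fn ξ))))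
          - ∫ ξ : Ed d, g ξ * (Fn ξ * conj (Fp ξ)) := integral_sub i12 i3
    have eC : ∫ ξ : Ed d, (g ξ * (Fp ξ * conj (Fp ξ)) - g ξ * (Fp ξ * conj (Fn ξ)))
        = (∫ ξ : Ed d, g ξ * (Fp ξ * conj (Fp ξ)))
          - ∫ ξ : Ed d, g ξ * (Fp ξ * conj (Fn ξ)) := integral_sub i1 i2
    rw [h0, integral_congr_ae (Filter.Eventually.of_forall hexpand), eA, eB, eC]
  rw [crossTerm μp μp b hb, crossTerm μp μn b hb, crossTerm μn μp b hb,
    crossTerm μn μn b hb] at hsplit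
  have hreal : ∫ ξ : Ed d, rexp (-b * ‖ξ‖^2) * ‖fourierSM d ν ξ‖^2
      = (∫ x, ∫ y, gaussFn d b (x - y) ∂μp ∂μp) - (∫ x, ∫ y, gaussFn d b (x - y) ∂μn ∂μp)
        - (∫ x, ∫ y, gaussFn d b (x - y) ∂μp ∂μn)
        + ∫ x, ∫ y, gaussFn d b (x - y) ∂μn ∂μn := by
    have := hsplit
    push_cast at this
    exact_mod_cast this
  -- identify heatConv
  have hHC : ∀ x : Ed d, heatConv d (2*t) ν x
      = (∫ y, gaussFn d b (x - y) ∂μp) - ∫ y, gaussFn d b (x - y) ∂μn := by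
    intro x
    unfold heatConv smIntegral
    rw [← hμp, ← hμn]
    congr 1 <;>
      exact integral_congr_ae (Filter.Eventually.of_forall fun y =>
        (gaussFn_eq_heat d t ht (x - y)).symm)
  have hp : ∫ x, heatConv d (2*t) ν x ∂μp
      = (∫ x, ∫ y, gaussFn d b (x - y) ∂μp ∂μp) - ∫ x, ∫ y, gaussFn d b (x - y) ∂μn ∂μp := by
    rw [← integral_sub (GG_integrable μp μp b hb) (GG_integrable μp μn b hb)]
    exact integral_congr_ae (Filter.Eventually.of_forall fun x => hHC x)
  have hn : ∫ x, heatConv d (2*t) ν x ∂μn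
      = (∫ x, ∫ y, gaussFn d b (x - y) ∂μp ∂μn) - ∫ x, ∫ y, gaussFn d b (x - y) ∂μn ∂μn := by
    rw [← integral_sub (GG_integrable μn μp b hb) (GG_integrable μn μn b hb)]
    exact integral_congr_ae (Filter.Eventually.of_forall fun x => hHC x)
  rw [hreal, hp, hn]
  ring

end Part3
section Part4
variable {d : ℕ}

lemma heatConv_integrable (ν : MeasureTheory.SignedMeasure (Ed d)) (t : ℝ) (ht : 0 < t)
    (M : ℝ) (hM : ∀ x, |heatConv d t ν x| ≤ M)
    (μ : Measure (Ed d)) [IsFiniteMeasure μ] : Integrable (heatConv d t ν) μ := by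
  apply Integrable.mono' (g := fun _ => M) (integrable_const _)
    (heatConv_continuous ν t ht).aestronglyMeasurable
  exact Filter.Eventually.of_forall fun x => hM x

lemma key_ennreal (ν : MeasureTheory.SignedMeasure (Ed d)) (t : ℝ) (ht : 0 < t)
    (hfin : eLpNorm (heatConv d (2*t) ν) ⊤ (volume : Measure (Ed d)) ≠ ⊤) :
    ENNReal.ofReal (∫ ξ : Ed d, rexp (-(8 * π^2 * t) * ‖ξ‖^2) * ‖fourierSM d ν ξ‖^2)
      ≤ eLpNorm (heatConv d (2*t) ν) ⊤ (volume : Measure (Ed d))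
          * ν.totalVariation Set.univ := by
  set μp := ν.toJordanDecomposition.posPart with hμp
  set μn := ν.toJordanDecomposition.negPart with hμn
  set M := (eLpNorm (heatConv d (2*t) ν) ⊤ (volume : Measure (Ed d))).toReal with hMdef
  have h2t : 0 < 2 * t := by linarith
  have hM : ∀ x, |heatConv d (2*t) ν x| ≤ M :=
    cont_le_essSup _ (heatConv_continuous ν (2*t) h2t) hfin
  have hip : Integrable (heatConv d (2*t) ν) μp := heatConv_integrable ν (2*t) h2t M hM μp
  have hin : Integrable (heatConv d (2*t) ν) μn := heatConv_integrable ν (2*t) h2t M hM μn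
  have h1 : ∫ x, heatConv d (2*t) ν x ∂μp ≤ M * (μp Set.univ).toReal := by
    calc ∫ x, heatConv d (2*t) ν x ∂μp ≤ ∫ _x, M ∂μp := by
          apply integral_mono hip (integrable_const _)
          exact fun x => le_trans (le_abs_self _) (hM x)
      _ = M * (μp Set.univ).toReal := by simp [mul_comm, Measure.real]
  have h2 : -∫ x, heatConv d (2*t) ν x ∂μn ≤ M * (μn Set.univ).toReal := by
    have : ∫ _x, (-M : ℝ) ∂μn ≤ ∫ x, heatConv d (2*t) ν x ∂μn := by
      apply integral_mono (integrable_const _) hin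
      exact fun x => (abs_le.mp (hM x)).1
    have hc : ∫ _x, (-M : ℝ) ∂μn = -(M * (μn Set.univ).toReal) := by simp [mul_comm, Measure.real]
    linarith
  have hreal : ∫ ξ : Ed d, rexp (-(8 * π^2 * t) * ‖ξ‖^2) * ‖fourierSM d ν ξ‖^2
      ≤ M * ((μp Set.univ).toReal + (μn Set.univ).toReal) := by
    rw [key_eq ν t ht]
    have := h1
    have := h2
    nlinarith [h1, h2]
  calc ENNReal.ofReal (∫ ξ : Ed d, rexp (-(8 * π^2 * t) * ‖ξ‖^2) * ‖fourierSM d ν ξ‖^2)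
      ≤ ENNReal.ofReal (M * ((μp Set.univ).toReal + (μn Set.univ).toReal)) :=
        ENNReal.ofReal_le_ofReal hreal
    _ = ENNReal.ofReal M * ENNReal.ofReal ((μp Set.univ).toReal + (μn Set.univ).toReal) :=
        ENNReal.ofReal_mul ENNReal.toReal_nonneg
    _ = eLpNorm (heatConv d (2*t) ν) ⊤ (volume : Measure (Ed d))
          * ν.totalVariation Set.univ := by
        rw [hMdef, ENNReal.ofReal_toReal hfin]
        congr 1
        rw [ENNReal.ofReal_add ENNReal.toReal_nonneg ENNReal.toReal_nonneg,
          ENNReal.ofReal_toReal (measure_ne_top _ _), ENNReal.ofReal_toReal (measure_ne_top _ _)]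
        rw [MeasureTheory.SignedMeasure.totalVariation]
        rfl

lemma besov_bound (β : ℝ) (ν : MeasureTheory.SignedMeasure (Ed d))
    (hB : besovNorm d β ν ≠ ⊤) (t : ℝ) (ht : 0 < t) :
    eLpNorm (heatConv d t ν) ⊤ (volume : Measure (Ed d)) ≠ ⊤ ∧
    eLpNorm (heatConv d t ν) ⊤ (volume : Measure (Ed d))
      ≤ ENNReal.ofReal (t ^ (-(((d:ℝ) - β)/2))) * besovNorm d β ν := by
  set γ := ((d:ℝ) - β)/2 with hγ
  have hle : ENNReal.ofReal (t ^ γ) * eLpNorm (heatConv d t ν) ⊤ volume ≤ besovNorm d β ν :=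
    le_iSup (fun s : {s : ℝ // 0 < s} =>
      ENNReal.ofReal (s.1 ^ γ) * eLpNorm (heatConv d s.1 ν) ⊤ volume) ⟨t, ht⟩
  have ha0 : ENNReal.ofReal (t ^ γ) ≠ 0 :=
    (ENNReal.ofReal_pos.mpr (Real.rpow_pos_of_pos ht γ)).ne'
  have hinv : (ENNReal.ofReal (t ^ γ))⁻¹ = ENNReal.ofReal (t ^ (-γ)) := by
    rw [Real.rpow_neg ht.le, ENNReal.ofReal_inv_of_pos (Real.rpow_pos_of_pos ht γ)]
  have hmain : eLpNorm (heatConv d t ν) ⊤ (volume : Measure (Ed d))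
      ≤ ENNReal.ofReal (t ^ (-γ)) * besovNorm d β ν := by
    calc eLpNorm (heatConv d t ν) ⊤ (volume : Measure (Ed d))
        = (ENNReal.ofReal (t ^ γ))⁻¹ *
            (ENNReal.ofReal (t ^ γ) * eLpNorm (heatConv d t ν) ⊤ volume) := by
          rw [← mul_assoc, ENNReal.inv_mul_cancel ha0 ENNReal.ofReal_ne_top, one_mul]
      _ ≤ (ENNReal.ofReal (t ^ γ))⁻¹ * besovNorm d β ν := mul_le_mul_right hle _
      _ = ENNReal.ofReal (t ^ (-γ)) * besovNorm d β ν := by rw [hinv]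
  refine ⟨?_, hmain⟩
  exact ne_top_of_le_ne_top (ENNReal.mul_ne_top ENNReal.ofReal_ne_top hB) hmain

end Part4
section Part5a

lemma Ej_eq (d : ℕ) (β α R : ℝ) (hR : 0 < R) (j : ℕ) :
    ((2:ℝ)^((j:ℝ)) * R) ^ (-(2*α)) * rexp (8*π^2)
        * (2 * ((((2:ℝ)^((j:ℝ)+1)) * R)^(2:ℕ))⁻¹) ^ (-(((d:ℝ)-β)/2))
      = (rexp (8*π^2) * (2:ℝ)^(((d:ℝ)-β)/2) * R ^ ((d:ℝ)-β-2*α))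
          * (((2:ℝ)^((d:ℝ)-β-2*α)) ^ j) := by
  set γ := ((d:ℝ)-β)/2 with hγ
  set e2 := (d:ℝ)-β-2*α with he2
  have h2 : (0:ℝ) ≤ 2 := by norm_num
  have c2 : ∀ a b : ℝ, (2:ℝ)^a * (2:ℝ)^b = (2:ℝ)^(a+b) := fun a b =>
    (Real.rpow_add two_pos a b).symm
  have cR : ∀ a b : ℝ, R^a * R^b = R^(a+b) := fun a b => (Real.rpow_add hR a b).symm
  have l1 : ((2:ℝ)^((j:ℝ)) * R) ^ (-(2*α))
      = (2:ℝ)^((j:ℝ) * -(2*α)) * R^(-(2*α)) := by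
    rw [Real.mul_rpow (by positivity) hR.le, ← Real.rpow_mul h2]
  have l2 : (2 * ((((2:ℝ)^((j:ℝ)+1)) * R)^(2:ℕ))⁻¹)
      = (2:ℝ)^(1 + -(((j:ℝ)+1)*2)) * R^(-(2:ℝ)) := by
    rw [mul_pow, ← Real.rpow_natCast ((2:ℝ)^((j:ℝ)+1)) 2, ← Real.rpow_mul h2,
      ← Real.rpow_natCast R 2, mul_inv, ← Real.rpow_neg h2, ← Real.rpow_neg hR.le,
      Real.rpow_add two_pos, Real.rpow_one]
    norm_num
    ring
  have l3 : ((2:ℝ)^(1 + -(((j:ℝ)+1)*2)) * R^(-(2:ℝ)))^(-γ)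
      = (2:ℝ)^((1 + -(((j:ℝ)+1)*2)) * -γ) * R^((-(2:ℝ)) * -γ) := by
    rw [Real.mul_rpow (by positivity) (by positivity), ← Real.rpow_mul h2,
      ← Real.rpow_mul hR.le]
  have l4 : (((2:ℝ)^(e2)) ^ j) = (2:ℝ)^(e2 * (j:ℝ)) := by
    rw [← Real.rpow_natCast ((2:ℝ)^e2) j, ← Real.rpow_mul h2]
  rw [l1, l2, l3, l4]
  calc ((2:ℝ)^((j:ℝ) * -(2*α)) * R^(-(2*α))) * rexp (8*π^2)
        * ((2:ℝ)^((1 + -(((j:ℝ)+1)*2)) * -γ) * R^((-(2:ℝ)) * -γ))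
      = ((2:ℝ)^((j:ℝ) * -(2*α)) * (2:ℝ)^((1 + -(((j:ℝ)+1)*2)) * -γ))
          * (R^(-(2*α)) * R^((-(2:ℝ)) * -γ)) * rexp (8*π^2) := by ring
    _ = (2:ℝ)^((j:ℝ) * -(2*α) + (1 + -(((j:ℝ)+1)*2)) * -γ)
          * R^(-(2*α) + (-(2:ℝ)) * -γ) * rexp (8*π^2) := by rw [c2, cR]
    _ = (2:ℝ)^(γ + e2 * (j:ℝ)) * R^(e2) * rexp (8*π^2) := by
        rw [show (j:ℝ) * -(2*α) + (1 + -(((j:ℝ)+1)*2)) * -γ = γ + e2 * (j:ℝ) by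
            rw [hγ, he2]; ring,
          show -(2*α) + (-(2:ℝ)) * -γ = e2 by rw [hγ, he2]; ring]
    _ = (rexp (8*π^2) * (2:ℝ)^γ * R ^ e2) * (2:ℝ)^(e2 * (j:ℝ)) := by
        rw [← c2]; ring

end Part5a
section Part5
variable {d : ℕ}

lemma fourier_cont (ν : MeasureTheory.SignedMeasure (Ed d)) : Continuous (fourierSM d ν) := by
  have : fourierSM d ν = fun ξ => (∫ x, ker x ξ ∂ν.toJordanDecomposition.posPart)
      - ∫ x, ker x ξ ∂ν.toJordanDecomposition.negPart := funext fun ξ => fourierSM_eq ν ξ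
  rw [this]
  exact (Fcont _).sub (Fcont _)

lemma norm_fourier_le (ν : MeasureTheory.SignedMeasure (Ed d)) (ξ : Ed d) :
    ‖fourierSM d ν ξ‖ ≤ (ν.toJordanDecomposition.posPart Set.univ).toReal
      + (ν.toJordanDecomposition.negPart Set.univ).toReal := by
  rw [fourierSM_eq]
  exact (norm_sub_le _ _).trans (add_le_add (norm_F_le _ ξ) (norm_F_le _ ξ))

lemma Fint (ν : MeasureTheory.SignedMeasure (Ed d)) (b : ℝ) (hb : 0 < b) :
    Integrable (fun ξ : Ed d => rexp (-b * ‖ξ‖^2) * ‖fourierSM d ν ξ‖^2) := by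
  set K := (ν.toJordanDecomposition.posPart Set.univ).toReal
    + (ν.toJordanDecomposition.negPart Set.univ).toReal with hK
  have hK0 : 0 ≤ K := by positivity
  apply Integrable.mono' (g := fun ξ : Ed d => K^2 * rexp (-b * ‖ξ‖^2))
    ((integrable_gauss d b hb).const_mul _)
  · apply Continuous.aestronglyMeasurable
    exact (by fun_prop : Continuous fun ξ : Ed d => rexp (-b * ‖ξ‖^2)).mul
      (((fourier_cont ν).norm).pow 2)
  · refine Filter.Eventually.of_forall fun ξ => ?_
    rw [Real.norm_eq_abs, abs_of_nonneg (by positivity)]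
    have h1 : ‖fourierSM d ν ξ‖^2 ≤ K^2 :=
      pow_le_pow_left₀ (norm_nonneg _) (norm_fourier_le ν ξ) 2
    calc rexp (-b * ‖ξ‖^2) * ‖fourierSM d ν ξ‖^2 ≤ rexp (-b * ‖ξ‖^2) * K^2 :=
          mul_le_mul_of_nonneg_left h1 (Real.exp_pos _).le
      _ = K^2 * rexp (-b * ‖ξ‖^2) := by ring

end Part5
/-- For `β ∈ (0,d]` and `α > (d-β)/2` there is `C = C(d,α,β) > 0` such that every
finite signed measure `μ` with `‖μ‖_B = sup_{t>0} t^{(d-β)/2}‖p_t ∗ μ‖_∞ < ∞` satisfies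
`∫_{|ξ|≥R} |ξ|^{-2α} |μ̂(ξ)|² dξ ≤ C R^{d-β-2α} ‖μ‖ ‖μ‖_B` for all `R > 0`. -/
theorem stmt9 (d : ℕ) (hd : 1 ≤ d) (β α : ℝ) (hβ0 : 0 < β) (hβd : β ≤ d)
    (hα : ((d : ℝ) - β) / 2 < α) :
    ∃ C : ℝ, 0 < C ∧
      ∀ ν : MeasureTheory.SignedMeasure (Ed d), besovNorm d β ν ≠ ⊤ →
      ∀ R : ℝ, 0 < R →
        (∫⁻ ξ in {ξ : Ed d | R ≤ ‖ξ‖},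
            ENNReal.ofReal (‖ξ‖ ^ (-(2 * α)) * ‖fourierSM d ν ξ‖ ^ 2))
          ≤ ENNReal.ofReal (C * R ^ ((d : ℝ) - β - 2 * α)) *
              ν.totalVariation Set.univ * besovNorm d β ν := by
  have hγ0 : 0 ≤ ((d:ℝ) - β) / 2 := by
    have : β ≤ (d:ℝ) := hβd
    linarith
  have hαpos : 0 < α := lt_of_le_of_lt hγ0 hα
  have he2neg : (d:ℝ) - β - 2*α < 0 := by linarith
  set γ := ((d:ℝ) - β)/2 with hγdef
  set e2 := (d:ℝ) - β - 2*α with he2def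
  set q := (2:ℝ) ^ e2 with hqdef
  have hq0 : 0 < q := Real.rpow_pos_of_pos two_pos _
  have hq1 : q < 1 := Real.rpow_lt_one_of_one_lt_of_neg one_lt_two he2neg
  set C := rexp (8*π^2) * (2:ℝ)^γ / (1 - q) with hCdef
  have hC : 0 < C := by
    apply div_pos (by positivity)
    linarith
  refine ⟨C, hC, ?_⟩
  intro ν hB R hR
  set s : ℕ → Set (Ed d) := fun j =>
    {ξ : Ed d | (2:ℝ)^((j:ℝ)) * R ≤ ‖ξ‖ ∧ ‖ξ‖ < (2:ℝ)^((j:ℝ)+1) * R} with hsdef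
  -- covering
  have hcover : {ξ : Ed d | R ≤ ‖ξ‖} ⊆ ⋃ j, s j := by
    intro ξ hξ
    simp only [Set.mem_setOf_eq] at hξ
    have hP : ∃ n : ℕ, ‖ξ‖ < (2:ℝ)^((n:ℝ)+1) * R := by
      obtain ⟨n, hn⟩ := pow_unbounded_of_one_lt (‖ξ‖ / R) one_lt_two
      refine ⟨n, ?_⟩
      have h1 : ‖ξ‖ < 2^n * R := (div_lt_iff₀ hR).mp hn
      have h2 : ((2:ℝ)^n : ℝ) = (2:ℝ)^((n:ℝ)) := (Real.rpow_natCast 2 n).symm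
      have h3 : (2:ℝ)^((n:ℝ)) ≤ (2:ℝ)^((n:ℝ)+1) :=
        Real.rpow_le_rpow_of_exponent_le one_le_two (by linarith)
      have h4 : (2:ℝ)^((n:ℝ)) * R ≤ (2:ℝ)^((n:ℝ)+1) * R :=
        mul_le_mul_of_nonneg_right h3 hR.le
      rw [h2] at h1
      linarith
    refine Set.mem_iUnion.mpr ⟨Nat.find hP, ?_, Nat.find_spec hP⟩
    rcases h : Nat.find hP with _ | k
    · simpa using hξ
    · have hmin : ¬ (‖ξ‖ < (2:ℝ)^((k:ℝ)+1) * R) := Nat.find_min hP (by omega)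
      push_neg at hmin
      have : ((k:ℝ)+1) = (((k+1:ℕ)):ℝ) := by push_cast; ring
      rw [this] at hmin
      exact hmin
  -- per-shell bound
  have hshell : ∀ j : ℕ,
      (∫⁻ ξ in s j, ENNReal.ofReal (‖ξ‖ ^ (-(2 * α)) * ‖fourierSM d ν ξ‖ ^ 2))
        ≤ ENNReal.ofReal ((rexp (8*π^2) * (2:ℝ)^γ * R ^ e2) * q ^ j)
            * (besovNorm d β ν * ν.totalVariation Set.univ) := by
    intro j
    set r0 := (2:ℝ)^((j:ℝ)) * R with hr0def
    set r1 := (2:ℝ)^((j:ℝ)+1) * R with hr1def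
    have hr0 : 0 < r0 := by rw [hr0def]; positivity
    have hr1 : 0 < r1 := by rw [hr1def]; positivity
    set tj := ((r1^(2:ℕ))⁻¹ : ℝ) with htjdef
    have htj : 0 < tj := by rw [htjdef]; positivity
    have hbb := besov_bound β ν hB (2*tj) (by positivity)
    have hkey := key_ennreal ν tj htj hbb.1
    set cj := r0 ^ (-(2*α)) * rexp (8*π^2) with hcjdef
    have hcj0 : 0 ≤ cj := by rw [hcjdef]; positivity
    -- pointwise inequality on the shell
    have hpoint : ∀ ξ ∈ s j,
        ENNReal.ofReal (‖ξ‖ ^ (-(2 * α)) * ‖fourierSM d ν ξ‖ ^ 2)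
          ≤ ENNReal.ofReal (cj * (rexp (-(8 * π^2 * tj) * ‖ξ‖^2) * ‖fourierSM d ν ξ‖ ^ 2)) := by
      intro ξ hξ
      obtain ⟨hlow, hhigh⟩ := hξ
      apply ENNReal.ofReal_le_ofReal
      have h1 : ‖ξ‖ ^ (-(2*α)) ≤ r0 ^ (-(2*α)) :=
        Real.rpow_le_rpow_of_nonpos hr0 hlow (by linarith)
      have htj1 : tj * ‖ξ‖^2 ≤ 1 := by
        have hsq : ‖ξ‖^2 ≤ r1^2 := by
          apply pow_le_pow_left₀ (norm_nonneg _) hhigh.le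
        rw [htjdef]
        calc (r1^(2:ℕ))⁻¹ * ‖ξ‖^2 ≤ (r1^(2:ℕ))⁻¹ * r1^2 :=
              mul_le_mul_of_nonneg_left hsq (by positivity)
          _ = 1 := inv_mul_cancel₀ (by positivity)
      have h2 : (1:ℝ) ≤ rexp (8*π^2) * rexp (-(8 * π^2 * tj) * ‖ξ‖^2) := by
        rw [← Real.exp_add]
        rw [show (1:ℝ) = rexp 0 from Real.exp_zero.symm]
        apply Real.exp_le_exp.mpr
        have hpi : (0:ℝ) < π^2 := by positivity
        nlinarith [htj1]
      calc ‖ξ‖ ^ (-(2*α)) * ‖fourierSM d ν ξ‖ ^ 2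
          ≤ r0 ^ (-(2*α)) * ‖fourierSM d ν ξ‖ ^ 2 :=
            mul_le_mul_of_nonneg_right h1 (by positivity)
        _ = r0 ^ (-(2*α)) * (1 * ‖fourierSM d ν ξ‖ ^ 2) := by ring
        _ ≤ r0 ^ (-(2*α)) * ((rexp (8*π^2) * rexp (-(8 * π^2 * tj) * ‖ξ‖^2))
              * ‖fourierSM d ν ξ‖ ^ 2) := by
            apply mul_le_mul_of_nonneg_left _ (by positivity)
            exact mul_le_mul_of_nonneg_right h2 (by positivity)
        _ = cj * (rexp (-(8 * π^2 * tj) * ‖ξ‖^2) * ‖fourierSM d ν ξ‖ ^ 2) := by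
            rw [hcjdef]; ring
    have hmeas : Measurable (fun ξ : Ed d =>
        ENNReal.ofReal (cj * (rexp (-(8 * π^2 * tj) * ‖ξ‖^2) * ‖fourierSM d ν ξ‖ ^ 2))) := by
      apply ENNReal.measurable_ofReal.comp
      apply Continuous.measurable
      apply Continuous.mul continuous_const
      exact (by fun_prop : Continuous fun ξ : Ed d =>
        rexp (-(8 * π^2 * tj) * ‖ξ‖^2)).mul (((fourier_cont ν).norm).pow 2)
    have hFi := Fint ν (8 * π^2 * tj) (by positivity)
    calc ∫⁻ ξ in s j, ENNReal.ofReal (‖ξ‖ ^ (-(2 * α)) * ‖fourierSM d ν ξ‖ ^ 2)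
        ≤ ∫⁻ ξ in s j, ENNReal.ofReal
            (cj * (rexp (-(8 * π^2 * tj) * ‖ξ‖^2) * ‖fourierSM d ν ξ‖ ^ 2)) :=
          setLIntegral_mono hmeas hpoint
      _ ≤ ∫⁻ ξ, ENNReal.ofReal
            (cj * (rexp (-(8 * π^2 * tj) * ‖ξ‖^2) * ‖fourierSM d ν ξ‖ ^ 2)) :=
          setLIntegral_le_lintegral _ _
      _ = ENNReal.ofReal cj * ∫⁻ ξ, ENNReal.ofReal
            (rexp (-(8 * π^2 * tj) * ‖ξ‖^2) * ‖fourierSM d ν ξ‖ ^ 2) := by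
          simp_rw [ENNReal.ofReal_mul hcj0]
          exact lintegral_const_mul' _ _ ENNReal.ofReal_ne_top
      _ = ENNReal.ofReal cj * ENNReal.ofReal
            (∫ ξ : Ed d, rexp (-(8 * π^2 * tj) * ‖ξ‖^2) * ‖fourierSM d ν ξ‖ ^ 2) := by
          rw [← ofReal_integral_eq_lintegral_ofReal hFi
            (Filter.Eventually.of_forall fun ξ => by positivity)]
      _ ≤ ENNReal.ofReal cj *
            (eLpNorm (heatConv d (2*tj) ν) ⊤ volume * ν.totalVariation Set.univ) :=
          mul_le_mul_right hkey _
      _ ≤ ENNReal.ofReal cj * ((ENNReal.ofReal ((2*tj) ^ (-γ)) * besovNorm d β ν)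
            * ν.totalVariation Set.univ) :=
          mul_le_mul_right (mul_le_mul_left hbb.2 _) _
      _ = ENNReal.ofReal (cj * (2*tj) ^ (-γ))
            * (besovNorm d β ν * ν.totalVariation Set.univ) := by
          rw [ENNReal.ofReal_mul hcj0]
          ring
      _ = ENNReal.ofReal ((rexp (8*π^2) * (2:ℝ)^γ * R ^ e2) * q ^ j)
            * (besovNorm d β ν * ν.totalVariation Set.univ) := by
          congr 2
          rw [hcjdef, htjdef, hr0def, hr1def, hqdef, hγdef, he2def]
          exact Ej_eq d β α R hR j
  -- sum up
  calc (∫⁻ ξ in {ξ : Ed d | R ≤ ‖ξ‖},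
        ENNReal.ofReal (‖ξ‖ ^ (-(2 * α)) * ‖fourierSM d ν ξ‖ ^ 2))
      ≤ ∫⁻ ξ in ⋃ j, s j, ENNReal.ofReal (‖ξ‖ ^ (-(2 * α)) * ‖fourierSM d ν ξ‖ ^ 2) :=
        lintegral_mono_set hcover
    _ ≤ ∑' j : ℕ, ∫⁻ ξ in s j, ENNReal.ofReal (‖ξ‖ ^ (-(2 * α)) * ‖fourierSM d ν ξ‖ ^ 2) :=
        lintegral_iUnion_le _ _
    _ ≤ ∑' j : ℕ, ENNReal.ofReal ((rexp (8*π^2) * (2:ℝ)^γ * R ^ e2) * q ^ j)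
          * (besovNorm d β ν * ν.totalVariation Set.univ) :=
        ENNReal.tsum_le_tsum hshell
    _ = (∑' j : ℕ, ENNReal.ofReal ((rexp (8*π^2) * (2:ℝ)^γ * R ^ e2) * q ^ j))
          * (besovNorm d β ν * ν.totalVariation Set.univ) := ENNReal.tsum_mul_right
    _ = ENNReal.ofReal (C * R ^ e2) * (besovNorm d β ν * ν.totalVariation Set.univ) := by
        congr 1
        have hC0R : (0:ℝ) ≤ rexp (8*π^2) * (2:ℝ)^γ * R ^ e2 := by positivity
        calc ∑' j : ℕ, ENNReal.ofReal ((rexp (8*π^2) * (2:ℝ)^γ * R ^ e2) * q ^ j)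
            = ∑' j : ℕ, ENNReal.ofReal (rexp (8*π^2) * (2:ℝ)^γ * R ^ e2)
                * (ENNReal.ofReal q) ^ j := by
              congr 1
              funext j
              rw [ENNReal.ofReal_mul hC0R, ENNReal.ofReal_pow hq0.le]
          _ = ENNReal.ofReal (rexp (8*π^2) * (2:ℝ)^γ * R ^ e2)
                * ∑' j : ℕ, (ENNReal.ofReal q) ^ j := ENNReal.tsum_mul_left
          _ = ENNReal.ofReal (rexp (8*π^2) * (2:ℝ)^γ * R ^ e2)
                * (1 - ENNReal.ofReal q)⁻¹ := by rw [ENNReal.tsum_geometric]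
          _ = ENNReal.ofReal (rexp (8*π^2) * (2:ℝ)^γ * R ^ e2)
                * ENNReal.ofReal ((1 - q)⁻¹) := by
              rw [← ENNReal.ofReal_one, ← ENNReal.ofReal_sub _ hq0.le,
                ENNReal.ofReal_inv_of_pos (by linarith)]
          _ = ENNReal.ofReal ((rexp (8*π^2) * (2:ℝ)^γ * R ^ e2) * (1 - q)⁻¹) :=
              (ENNReal.ofReal_mul hC0R).symm
          _ = ENNReal.ofReal (C * R ^ e2) := by
              rw [hCdef]
              congr 1
              ring
    _ = ENNReal.ofReal (C * R ^ e2) * ν.totalVariation Set.univ * besovNorm d β ν := by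
        ring
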